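/- Exact normalization of the nonlinear weight numerators: for every integer r ≥ 2, t = 2r−1, every h > 0, and arbitrary nonnegative real numbers J_{−r+1}, …, J_{−1}, J_{1}, …, J_{r−1}, the quantities α_0, …, α_{r−1} defined by α_k = C^{2r-1}_{r-1,k} + h^{−t}·( Σ_{l=k+1}^{r-1} C^{r+l-1}_{l-1,k}·J_l + Σ_{l=0}^{k-1} C^{2r-l-2}_{r-1,k}·J_{l-r+1} ) satisfy Σ_{k=0}^{r-1} α_k = 1 + h^{−t} · Σ_{l=1}^{r-1} (J_l + J_{−l}). -/

import Mathlib

/-- The classical optimal weights `C^{2r-1}_{r-1,k} = 2^{-(2r-1)} · C(2r, 2k+1)`. -/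
noncomputable def Copt (r k : ℕ) : ℝ :=
  (1 / 2 ^ (2 * r - 1)) * (Nat.choose (2 * r) (2 * k + 1) : ℝ)

/-- The general optimal weights `C^{r+l-1}_{l-1,k}`, for `1 ≤ l ≤ r` and `0 ≤ k ≤ l-1`. -/
noncomputable def C1 (r l k : ℕ) : ℝ :=
  (1 / 2 ^ (2 * l)) * (((r : ℝ) + (l : ℝ)) / (l : ℝ)) *
    (((l : ℝ) - (k : ℝ)) / ((r : ℝ) - (k : ℝ))) *
    (Nat.choose l k : ℝ) * ((Nat.choose r k : ℝ))⁻¹ * (Nat.choose (2 * l) l : ℝ) *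
    ((Nat.choose (l + r) r : ℝ))⁻¹ * (Nat.choose (2 * r) (2 * k + 1) : ℝ)

/-- The nonlinear weight numerators
`α_k = C^{2r-1}_{r-1,k} + h^{-(2r-1)}·(Σ_{l=k+1}^{r-1} C^{r+l-1}_{l-1,k} J_l
  + Σ_{l=0}^{k-1} C^{2r-l-2}_{r-1,k} J_{l-r+1})`,
where the reflected weight `C^{2r-l-2}_{r-1,k}` equals `C1 r (r-l-1) (r-1-k)`. -/
noncomputable def alphaJ (r : ℕ) (h : ℝ) (J : ℤ → ℝ) (k : ℕ) : ℝ :=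
  Copt r k + (h ^ (2 * r - 1))⁻¹ *
    ((∑ l ∈ Finset.Icc (k + 1) (r - 1), C1 r l k * J (l : ℤ)) +
      ∑ l ∈ Finset.range k, C1 r (r - l - 1) (r - 1 - k) * J ((l : ℤ) - (r : ℤ) + 1))

namespace AlphaNormAux

open PowerSeries Finset Nat

noncomputable def D (a : ℕ) : ℝ⟦X⟧ := PowerSeries.mk fun n => (Nat.choose (a + n) n : ℝ)

noncomputable def B (a : ℕ) : ℝ⟦X⟧ :=
  PowerSeries.mk fun n => if Even n then (Nat.choose (a + n / 2) (n / 2) : ℝ) else 0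

lemma coeff_one_sub_X_mul (f : ℝ⟦X⟧) (n : ℕ) :
    (coeff (n+1)) ((1 - X) * f) = coeff (n+1) f - coeff n f := by
  rw [sub_mul, one_mul, map_sub, coeff_succ_X_mul]

lemma coeff_zero_one_sub_X_mul (f : ℝ⟦X⟧) :
    (coeff 0) ((1 - X) * f) = coeff 0 f := by
  rw [sub_mul, one_mul, map_sub]
  simp

lemma Dstep (a : ℕ) : (1 - X) * D (a+1) = D a := by
  ext n
  cases n with
  | zero => simp [coeff_zero_one_sub_X_mul, D]
  | succ n =>
    rw [coeff_one_sub_X_mul]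
    simp only [D, coeff_mk]
    rw [show a + 1 + (n + 1) = (a + 1 + n) + 1 from by omega,
      Nat.choose_succ_succ' (a + 1 + n) n]
    push_cast
    rw [show a + 1 + n = a + (n+1) from by omega]
    ring

lemma Dzero : (1 - X) * D 0 = 1 := by
  ext n
  cases n with
  | zero => simp [coeff_zero_one_sub_X_mul, D]
  | succ n =>
    rw [coeff_one_sub_X_mul]
    simp [D, coeff_one]

lemma Dinv (a : ℕ) : (1 - X)^(a+1) * D a = 1 := by
  induction a with
  | zero => simpa using Dzero
  | succ a ih =>
    have : (1 - X : ℝ⟦X⟧)^(a+1+1) * D (a+1) = (1-X)^(a+1) * ((1-X) * D (a+1)) := by ring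
    rw [this, Dstep, ih]

lemma coeff_one_sub_X2_mul (f : ℝ⟦X⟧) (n : ℕ) :
    (coeff (n+2)) ((1 - X^2) * f) = coeff (n+2) f - coeff n f := by
  rw [sub_mul, one_mul, map_sub]
  congr 1
  exact coeff_X_pow_mul f 2 n

lemma coeff_low_one_sub_X2_mul (f : ℝ⟦X⟧) (n : ℕ) (hn : n < 2) :
    (coeff n) ((1 - X^2) * f) = coeff n f := by
  rw [sub_mul, one_mul, map_sub, coeff_X_pow_mul']
  rw [if_neg (by omega)]
  ring

lemma Bstep (a : ℕ) : (1 - X^2) * B (a+1) = B a := by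
  ext n
  match n with
  | 0 => rw [coeff_low_one_sub_X2_mul _ _ (by omega)]; simp [B]
  | 1 => rw [coeff_low_one_sub_X2_mul _ _ (by omega)]; simp [B]
  | (n+2) =>
    rw [coeff_one_sub_X2_mul]
    simp only [B, coeff_mk]
    rcases Nat.even_or_odd n with he | ho
    · obtain ⟨m, rfl⟩ := he
      rw [if_pos (by rw [Nat.even_iff]; omega), if_pos (by rw [Nat.even_iff]; omega),
        if_pos (by rw [Nat.even_iff]; omega)]
      rw [show (m + m + 2) / 2 = m + 1 from by omega, show (m + m) / 2 = m from by omega]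
      rw [show a + 1 + (m + 1) = (a + 1 + m) + 1 from by omega,
        Nat.choose_succ_succ' (a + 1 + m) m]
      push_cast
      rw [show a + 1 + m = a + (m+1) from by omega]
      ring
    · obtain ⟨m, rfl⟩ := ho
      rw [if_neg (by rw [Nat.even_iff]; omega),
        if_neg (by rw [Nat.even_iff]; omega),
        if_neg (by rw [Nat.even_iff]; omega)]
      ring

lemma Bzero : (1 - X^2) * B 0 = 1 := by
  ext n
  match n with
  | 0 => rw [coeff_low_one_sub_X2_mul _ _ (by omega)]; simp [B]
  | 1 => rw [coeff_low_one_sub_X2_mul _ _ (by omega)]; simp [B]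
  | (n+2) =>
    rw [coeff_one_sub_X2_mul]
    simp only [B, coeff_mk]
    have h1 : ¬ (n + 2 = 0) := by omega
    rw [PowerSeries.coeff_one]
    rcases Nat.even_or_odd n with he | ho
    · obtain ⟨m, rfl⟩ := he
      rw [if_pos (by rw [Nat.even_iff]; omega), if_pos (by rw [Nat.even_iff]; omega), if_neg h1]
      simp
    · obtain ⟨m, rfl⟩ := ho
      rw [if_neg (by rw [Nat.even_iff]; omega),
        if_neg (by rw [Nat.even_iff]; omega), if_neg h1]
      ring

lemma Binv (a : ℕ) : (1 - X^2)^(a+1) * B a = 1 := by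
  induction a with
  | zero => simpa using Bzero
  | succ a ih =>
    have : (1 - X^2 : ℝ⟦X⟧)^(a+1+1) * B (a+1) = (1-X^2)^(a+1) * ((1-X^2) * B (a+1)) := by ring
    rw [this, Bstep, ih]

lemma coeff_onePlusX_pow (n k : ℕ) : coeff k ((1 + X)^n : ℝ⟦X⟧) = (n.choose k : ℝ) := by
  have h : ((((1 + Polynomial.X)^n : Polynomial ℝ) : Polynomial ℝ) : ℝ⟦X⟧) = (1 + X)^n := by
    rw [Polynomial.coe_pow, Polynomial.coe_add, Polynomial.coe_one, Polynomial.coe_X]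
  rw [← h, Polynomial.coeff_coe, Polynomial.coeff_one_add_X_pow]

lemma sum_range_pair {M : Type*} [AddCommMonoid M] (f : ℕ → M) (n : ℕ) :
    ∑ i ∈ Finset.range (2*n), f i = ∑ k ∈ Finset.range n, (f (2*k) + f (2*k+1)) := by
  induction n with
  | zero => simp
  | succ n ih =>
    rw [Finset.sum_range_succ, ← ih, show 2*(n+1) = (2*n+1)+1 from by omega,
      Finset.sum_range_succ, Finset.sum_range_succ]
    exact add_assoc _ _ _

lemma keyPS (m a : ℕ) : ((1+X)^(2*m+2*a+2) : ℝ⟦X⟧) * B a = (1+X)^(2*m+a+1) * D a := by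
  have h1 : (1 - X : ℝ⟦X⟧) ≠ 0 := fun hc => by
    have := congrArg (coeff 0) hc; simp at this
  have h2 : (1 + X : ℝ⟦X⟧) ≠ 0 := fun hc => by
    have := congrArg (coeff 0) hc; simp at this
  have hne : (((1-X)*(1+X))^(a+1) : ℝ⟦X⟧) ≠ 0 := pow_ne_zero _ (mul_ne_zero h1 h2)
  apply mul_right_cancel₀ hne
  have hfac : ((1-X)*(1+X) : ℝ⟦X⟧) = 1 - X^2 := by ring
  calc (1+X:ℝ⟦X⟧)^(2*m+2*a+2) * B a * ((1-X)*(1+X))^(a+1)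
      = (1+X)^(2*m+2*a+2) * ((1 - X^2)^(a+1) * B a) := by rw [hfac]; ring
    _ = (1+X)^(2*m+2*a+2) := by rw [Binv, mul_one]
    _ = (1+X)^(2*m+a+1) * ((1-X)^(a+1) * D a) * (1+X)^(a+1) := by
        rw [Dinv, mul_one, ← pow_add]; congr 1; omega
    _ = (1+X)^(2*m+a+1) * D a * ((1-X)*(1+X))^(a+1) := by rw [mul_pow]; ring

lemma lemmaL (m a : ℕ) : coeff (2*m+1) (((1+X)^(2*m+2*a+2) : ℝ⟦X⟧) * B a)
    = ∑ k ∈ Finset.range (m+1),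
        ((2*m+2*a+2).choose (2*k+1) : ℝ) * ((a + (m-k)).choose (m-k) : ℝ) := by
  rw [coeff_mul, Finset.Nat.sum_antidiagonal_eq_sum_range_succ_mk]
  dsimp only
  rw [show (2*m+1).succ = 2*(m+1) from by omega, sum_range_pair]
  apply Finset.sum_congr rfl
  intro k hk
  simp only [Finset.mem_range] at hk
  rw [coeff_onePlusX_pow, coeff_onePlusX_pow]
  simp only [B, coeff_mk]
  rw [if_neg (by rw [Nat.even_iff]; omega),
    if_pos (show Even (2*m+1-(2*k+1)) by rw [Nat.even_iff]; omega)]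
  rw [show 2*m+1-(2*k+1) = 2*(m-k) from by omega, show 2*(m-k)/2 = m - k from by omega]
  ring

lemma lemmaR (m a : ℕ) : coeff (2*m+1) (((1+X)^(2*m+a+1) : ℝ⟦X⟧) * D a)
    = 2^(2*m+1) * ((2*m+a+1).choose (2*m+1) : ℝ) := by
  rw [coeff_mul, Finset.Nat.sum_antidiagonal_eq_sum_range_succ_mk]
  dsimp only
  rw [show (2*m+1).succ = 2*m+1+1 from rfl]
  have hstep : ∀ i ∈ Finset.range (2*m+1+1),
      coeff i ((1+X)^(2*m+a+1) : ℝ⟦X⟧) * coeff (2*m+1-i) (D a)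
        = ((2*m+a+1).choose (2*m+1) : ℝ) * ((2*m+1).choose i : ℝ) := by
    intro i hi
    simp only [Finset.mem_range] at hi
    rw [coeff_onePlusX_pow]
    simp only [D, coeff_mk]
    have hnat := Nat.choose_mul (n := 2*m+a+1) (k := 2*m+1)
      (show i ≤ 2*m+1 from by omega)
    rw [show a + (2*m+1-i) = 2*m+a+1-i from by omega]
    have := congrArg (fun x : ℕ => (x : ℝ)) hnat
    push_cast at this
    linarith [this]
  rw [Finset.sum_congr rfl hstep, ← Finset.mul_sum]
  rw [show (∑ i ∈ Finset.range (2*m+1+1), ((2*m+1).choose i : ℝ))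
      = ((∑ i ∈ Finset.range (2*m+1+1), (2*m+1).choose i : ℕ) : ℝ) from by push_cast; rfl,
    Nat.sum_range_choose]
  push_cast
  ring

lemma keyIdent (m a : ℕ) :
    ∑ k ∈ Finset.range (m+1),
        ((2*m+2*a+2).choose (2*k+1) : ℝ) * ((a + (m-k)).choose (m-k) : ℝ)
      = 2^(2*m+1) * ((2*m+a+1).choose (2*m+1) : ℝ) := by
  rw [← lemmaL, ← lemmaR, keyPS]

lemma hchoose (a b : ℕ) : ((a+b).choose a : ℝ) = (a+b)! / (a ! * b !) := by
  have h := Nat.choose_mul_factorial_mul_factorial (show a ≤ a+b by omega)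
  rw [Nat.add_sub_cancel_left] at h
  rw [eq_div_iff (by positivity), ← mul_assoc]
  exact_mod_cast h

lemma hc (n a b : ℕ) (hn : n = a + b) : (n.choose a : ℝ) = n ! / (a ! * b !) := by
  rw [hn]; exact hchoose a b

lemma hfs (n m : ℕ) (hn : n = m + 1) : ((n) ! : ℝ) = n * (m) ! := by
  subst hn; rw [Nat.factorial_succ]; push_cast; ring

lemma C1_eq (k d e : ℕ) :
    C1 (k+d+1+e) (k+d+1) k
      = ((d+e).choose d : ℝ) * ((2*(k+d+1+e)).choose (2*k+1) : ℝ)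
        / (2^(2*k+2*d+1) * ((2*k+2*d+e+1).choose (2*k+2*d+1) : ℝ)) := by
  unfold C1
  rw [hc (k+d+1) k (d+1) (by omega),
      hc (k+d+1+e) k (d+e+1) (by omega),
      hc (2*(k+d+1)) (k+d+1) (k+d+1) (by omega),
      hc ((k+d+1)+(k+d+1+e)) (k+d+1+e) (k+d+1) (by omega),
      hc (2*(k+d+1+e)) (2*k+1) (2*d+2*e+1) (by omega),
      hc (d+e) d e (by omega),
      hc (2*k+2*d+e+1) (2*k+2*d+1) e (by omega),
      hfs (2*(k+d+1)) (2*k+2*d+1) (by omega),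
      hfs ((k+d+1)+(k+d+1+e)) (2*k+2*d+e+1) (by omega),
      hfs (d+1) d rfl,
      hfs (d+e+1) (d+e) rfl]
  have f1 : ((k ! : ℝ)) ≠ 0 := by positivity
  have f2 : ((d ! : ℝ)) ≠ 0 := by positivity
  have f3 : ((e ! : ℝ)) ≠ 0 := by positivity
  have f4 : (((d+e) ! : ℝ)) ≠ 0 := by positivity
  have f5 : (((k+d+1) ! : ℝ)) ≠ 0 := by positivity
  have f6 : (((k+d+1+e) ! : ℝ)) ≠ 0 := by positivity
  have f7 : (((2*k+2*d+1) ! : ℝ)) ≠ 0 := by positivity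
  have f8 : (((2*k+2*d+e+1) ! : ℝ)) ≠ 0 := by positivity
  have f9 : (((2*k+1) ! : ℝ)) ≠ 0 := by positivity
  have f10 : (((2*d+2*e+1) ! : ℝ)) ≠ 0 := by positivity
  have g1 : ((k+d+1 : ℕ) : ℝ) ≠ 0 := by positivity
  have g2 : (((k+d+1+e : ℕ)) : ℝ) - (k : ℝ) ≠ 0 := by
    push_cast; intro hcon; nlinarith [(0:ℝ) ≤ (d:ℝ)]
  push_cast
  push_cast at g2 g1
  field_simp
  ring

lemma sumC1 (r l : ℕ) (h1 : 1 ≤ l) (h2 : l < r) :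
    ∑ k ∈ Finset.range l, C1 r l k = 1 := by
  obtain ⟨m, rfl⟩ : ∃ m, l = m+1 := ⟨l-1, by omega⟩
  obtain ⟨a, rfl⟩ : ∃ a, r = m+1+a := ⟨r-(m+1), by omega⟩
  have hterm : ∀ k ∈ Finset.range (m+1), C1 (m+1+a) (m+1) k
      = ((2*m+2*a+2).choose (2*k+1) : ℝ) * ((a + (m-k)).choose (m-k) : ℝ)
        / (2^(2*m+1) * ((2*m+a+1).choose (2*m+1) : ℝ)) := by
    intro k hk
    simp only [Finset.mem_range] at hk
    have hthis := C1_eq k (m-k) a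
    rw [show k+(m-k)+1+a = m+1+a from by omega, show k+(m-k)+1 = m+1 from by omega,
      show 2*k+2*(m-k)+1 = 2*m+1 from by omega,
      show 2*k+2*(m-k)+a+1 = 2*m+a+1 from by omega,
      show (m-k)+a = a+(m-k) from by omega,
      show 2*(m+1+a) = 2*m+2*a+2 from by omega] at hthis
    rw [hthis]
    ring
  rw [Finset.sum_congr rfl hterm, ← Finset.sum_div, keyIdent]
  have hp : 0 < (2*m+a+1).choose (2*m+1) := Nat.choose_pos (by omega)
  have : (2:ℝ)^(2*m+1) * ((2*m+a+1).choose (2*m+1) : ℝ) ≠ 0 :=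
    mul_ne_zero (by positivity) (Nat.cast_ne_zero.mpr hp.ne')
  field_simp

lemma sumOddChoose (r : ℕ) (hr : 1 ≤ r) :
    ∑ k ∈ Finset.range r, ((2*r).choose (2*k+1) : ℤ) = 2^(2*r-1) := by
  have hA : ∑ i ∈ Finset.range (2*(r+1)), ((2*r).choose i : ℤ) = 2^(2*r) := by
    have h1 : ∑ i ∈ Finset.range (2*r+1), ((2*r).choose i : ℤ) = 2^(2*r) := by
      exact_mod_cast congrArg (Nat.cast : ℕ → ℤ) (Nat.sum_range_choose (2*r))
    rw [show 2*(r+1) = (2*r+1)+1 from by omega, Finset.sum_range_succ,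
      Nat.choose_eq_zero_of_lt (by omega)]
    simpa using h1
  have hB : ∑ i ∈ Finset.range (2*(r+1)), ((-1)^i * ((2*r).choose i : ℤ)) = 0 := by
    have h1 := Int.alternating_sum_range_choose_of_ne (show 2*r ≠ 0 by omega)
    rw [show 2*(r+1) = (2*r+1)+1 from by omega, Finset.sum_range_succ,
      Nat.choose_eq_zero_of_lt (by omega)]
    simpa using h1
  rw [sum_range_pair] at hA hB
  have hB' : ∑ k ∈ Finset.range (r+1),
      (((2*r).choose (2*k) : ℤ) - ((2*r).choose (2*k+1) : ℤ)) = 0 := by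
    rw [← hB]
    apply Finset.sum_congr rfl
    intro k _
    rw [pow_succ, Even.neg_one_pow (⟨k, by ring⟩ : Even (2*k))]
    ring
  have hsum : ∑ k ∈ Finset.range (r+1), ((2*r).choose (2*k+1) : ℤ) = 2^(2*r-1) := by
    have hAB : ∑ k ∈ Finset.range (r+1), (2 * ((2*r).choose (2*k+1) : ℤ)) = 2^(2*r) := by
      calc ∑ k ∈ Finset.range (r+1), (2 * ((2*r).choose (2*k+1) : ℤ))
          = ∑ k ∈ Finset.range (r+1),
              ((((2*r).choose (2*k) : ℤ) + ((2*r).choose (2*k+1) : ℤ))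
                - (((2*r).choose (2*k) : ℤ) - ((2*r).choose (2*k+1) : ℤ))) :=
            Finset.sum_congr rfl (by intro k _; ring)
        _ = 2^(2*r) - 0 := by rw [Finset.sum_sub_distrib, hA, hB']
        _ = 2^(2*r) := by ring
    rw [← Finset.mul_sum] at hAB
    have h2 : (2:ℤ)^(2*r) = 2 * 2^(2*r-1) := by
      have hh2 : 2*r-1+1 = 2*r := by omega
      calc (2:ℤ)^(2*r) = 2^(2*r-1+1) := by rw [hh2]
        _ = 2 * 2^(2*r-1) := by rw [pow_succ]; ring
    rw [h2] at hAB
    exact mul_left_cancel₀ (by norm_num) hAB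
  rw [Finset.sum_range_succ, Nat.choose_eq_zero_of_lt (by omega)] at hsum
  simpa using hsum

lemma sumCopt (r : ℕ) (hr : 1 ≤ r) : ∑ k ∈ Finset.range r, Copt r k = 1 := by
  unfold Copt
  rw [← Finset.mul_sum]
  have h : ∑ k ∈ Finset.range r, ((2*r).choose (2*k+1) : ℝ) = 2^(2*r-1) := by
    exact_mod_cast congrArg (Int.cast : ℤ → ℝ) (sumOddChoose r hr)
  rw [h]
  field_simp

end AlphaNormAux

/-- Exact normalization of the nonlinear weight numerators:
`Σ_{k=0}^{r-1} α_k = 1 + h^{-(2r-1)} Σ_{l=1}^{r-1} (J_l + J_{-l})`. -/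
theorem alpha_normalization (r : ℕ) (hr : 2 ≤ r) (h : ℝ) (hh : 0 < h) (J : ℤ → ℝ)
    (hJ : ∀ ξ : ℤ, -(r : ℤ) + 1 ≤ ξ → ξ ≤ (r : ℤ) - 1 → ξ ≠ 0 → 0 ≤ J ξ) :
    (∑ k ∈ Finset.range r, alphaJ r h J k) =
      1 + (h ^ (2 * r - 1))⁻¹ * ∑ l ∈ Finset.Icc 1 (r - 1), (J (l : ℤ) + J (-(l : ℤ))) := by
  classical
  unfold alphaJ
  rw [Finset.sum_add_distrib, AlphaNormAux.sumCopt r (by omega), ← Finset.mul_sum,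
    Finset.sum_add_distrib]
  have hA : ∑ k ∈ Finset.range r, ∑ l ∈ Finset.Icc (k + 1) (r - 1), C1 r l k * J (l : ℤ)
      = ∑ l ∈ Finset.Icc 1 (r-1), J (l : ℤ) := by
    rw [Finset.sum_comm' (t' := Finset.Icc 1 (r-1)) (s' := fun l => Finset.range l)
      (by intro k l; simp only [Finset.mem_range, Finset.mem_Icc]; omega)]
    apply Finset.sum_congr rfl
    intro l hl
    simp only [Finset.mem_Icc] at hl
    rw [← Finset.sum_mul, AlphaNormAux.sumC1 r l (by omega) (by omega), one_mul]
  have hB : ∑ k ∈ Finset.range r, ∑ l ∈ Finset.range k,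
        C1 r (r - l - 1) (r - 1 - k) * J ((l : ℤ) - (r : ℤ) + 1)
      = ∑ l ∈ Finset.Icc 1 (r-1), J (-(l : ℤ)) := by
    rw [Finset.sum_comm' (t' := Finset.range (r-1)) (s' := fun l => Finset.Icc (l+1) (r-1))
      (by intro k l; simp only [Finset.mem_range, Finset.mem_Icc]; omega)]
    have hin : ∀ l ∈ Finset.range (r-1),
        (∑ k ∈ Finset.Icc (l+1) (r-1), C1 r (r - l - 1) (r - 1 - k) * J ((l : ℤ) - (r : ℤ) + 1))
          = J ((l : ℤ) - (r : ℤ) + 1) := by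
      intro l hl
      simp only [Finset.mem_range] at hl
      rw [← Finset.sum_mul]
      have hre : ∑ k ∈ Finset.Icc (l+1) (r-1), C1 r (r - l - 1) (r - 1 - k)
          = ∑ k ∈ Finset.range (r-l-1), C1 r (r - l - 1) k := by
        apply Finset.sum_nbij' (fun k => r-1-k) (fun k => r-1-k)
        · intro a ha; simp only [Finset.mem_Icc] at ha; simp only [Finset.mem_range]; omega
        · intro a ha; simp only [Finset.mem_range] at ha; simp only [Finset.mem_Icc]; omega
        · intro a ha; simp only [Finset.mem_Icc] at ha; omega
        · intro a ha; simp only [Finset.mem_range] at ha; omega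
        · intro a ha; rfl
      rw [hre, AlphaNormAux.sumC1 r (r-l-1) (by omega) (by omega), one_mul]
    rw [Finset.sum_congr rfl hin]
    apply Finset.sum_nbij' (fun l => r-1-l) (fun l => r-1-l)
    · intro a ha; simp only [Finset.mem_range] at ha; simp only [Finset.mem_Icc]; omega
    · intro a ha; simp only [Finset.mem_Icc] at ha; simp only [Finset.mem_range]; omega
    · intro a ha; simp only [Finset.mem_range] at ha; omega
    · intro a ha; simp only [Finset.mem_Icc] at ha; omega
    · intro a ha
      simp only [Finset.mem_range] at ha
      congr 1
      have : ((r-1-a : ℕ) : ℤ) = (r:ℤ) - 1 - (a:ℤ) := by omega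
      rw [this]
      ring
  rw [hA, hB, ← Finset.sum_add_distrib]
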